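/- Suppose π ∈ S_n contains an entry i ∈ [n−1] appearing before i+1 but not immediately before i+1, and let π' be obtained by swapping the entries i and i+1 in π. Then |SC_{132}^{-1}(π)| ≤ |SC_{132}^{-1}(π')|. -/

import Mathlib

open List Finset

attribute [local instance] Classical.propDecidable

/-- Two lists (with distinct entries) have the same relative order. -/
def SameRel (u v : List ℕ) : Prop :=
  u.length = v.length ∧ ∀ i j, i < j → j < u.length →
    (u.getD i 0 < u.getD j 0 ↔ v.getD i 0 < v.getD j 0)

/-- `l` contains `σ` as a classical pattern. -/
def ContainsPat (l σ : List ℕ) : Prop := ∃ u, u.Sublist l ∧ SameRel u σ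

/-- `l` contains `σ` as a consecutive pattern. -/
def ContainsC (l σ : List ℕ) : Prop := ∃ u, u.IsInfix l ∧ SameRel u σ

/-- `l` avoids `σ` as a classical pattern. -/
def AvoidsPat (l σ : List ℕ) : Prop := ¬ ContainsPat l σ

/-- `l` avoids `σ` as a consecutive pattern. -/
def AvoidsC (l σ : List ℕ) : Prop := ¬ ContainsC l σ

/-- Generic right-greedy stack-sorting: push the next entry unless doing so creates a
`bad` stack (read top to bottom); otherwise pop the top of the stack to the output. -/
noncomputable def stackAux (bad : List ℕ → Prop) : List ℕ → List ℕ → List ℕ → List ℕ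
  | [], stack, out => out ++ stack
  | a :: rest, stack, out =>
    if bad (a :: stack) then
      match stack with
      | [] => stackAux bad rest [a] out
      | b :: s => stackAux bad (a :: rest) s (out ++ [b])
    else stackAux bad rest (a :: stack) out
  termination_by i s _ => 2 * i.length + s.length
  decreasing_by all_goals (first | omega | (simp [List.length_cons]; try omega))

noncomputable def SCgen (bad : List ℕ → Prop) (π : List ℕ) : List ℕ := stackAux bad π [] []

/-- The consecutive-`σ`-avoiding stack-sorting map. -/
noncomputable def SCc (σ : List ℕ) : List ℕ → List ℕ := SCgen (fun l => ContainsC l σ)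

/-- The classical-`σ`-avoiding stack-sorting map. -/
noncomputable def sCl (σ : List ℕ) : List ℕ → List ℕ := SCgen (fun l => ContainsPat l σ)

/-- `π` is (the one-line notation of) a permutation of `{1, …, n}`. -/
def IsPermList (n : ℕ) (π : List ℕ) : Prop := π.Perm ((List.range n).map (· + 1))

/-- Complementation on permutations of `{1, …, n}`. -/
def compl (n : ℕ) (π : List ℕ) : List ℕ := π.map (fun x => n + 1 - x)

/-- The finset of permutations of `{1, …, n}` in one-line notation. -/
def permsFinset (n : ℕ) : Finset (List ℕ) := ((List.range n).map (· + 1)).permutations.toFinset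

/-- The number of preimages of `π` in `S_n` under `f`. -/
noncomputable def preCount (f : List ℕ → List ℕ) (n : ℕ) (π : List ℕ) : ℕ :=
  ((permsFinset n).filter (fun τ => f τ = π)).card

def Tri (l : List ℕ) : Prop := ∃ s x y z t, l = s ++ x :: y :: z :: t ∧ x < y ∧ x < z ∧ z ≤ y

theorem tri_iff (l : List ℕ) : ContainsC l [1,3,2] ↔ Tri l := by
  constructor
  · rintro ⟨u, ⟨s, t, rfl⟩, hlen, hrel⟩
    match u, hlen with
    | [x, y, z], _ =>
      refine ⟨s, x, y, z, t, by simp, ?_, ?_, ?_⟩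
      · have := (hrel 0 1 (by omega) (by simp)).2 (by norm_num)
        simpa using this
      · have := (hrel 0 2 (by omega) (by simp)).2 (by norm_num)
        simpa using this
      · have := (hrel 1 2 (by omega) (by simp)).1
        simp at this; omega
  · rintro ⟨s, x, y, z, t, rfl, h1, h2, h3⟩
    refine ⟨[x,y,z], ⟨s, t, by simp⟩, by simp, ?_⟩
    intro a b hab hb
    simp at hb
    interval_cases b <;> interval_cases a <;> simp <;> omega


theorem duo {r : List ℕ} {a b : ℕ} (hnd : r.Nodup) (h1 : [a,b] <+ r) (h2 : [b,a] <+ r) :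
    a = b := by
  induction r with
  | nil => cases h1
  | cons x r ih =>
    rw [nodup_cons] at hnd
    cases h1 with
    | cons_cons h1' =>
      cases h2 with
      | cons_cons h2' => rfl
      | cons _ h2' => exact absurd (h2'.subset (show a ∈ [b,a] by simp)) hnd.1
    | cons _ h1' =>
      cases h2 with
      | cons_cons h2' => exact absurd (h1'.subset (show b ∈ [a,b] by simp)) hnd.1
      | cons _ h2' => exact ih hnd.2 h1' h2'

theorem pos2 {r : List ℕ} {p q : ℕ} (hpq : p < q) (hq : q < r.length) :
    [r.getD p 0, r.getD q 0] <+ r := by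
  have hp : p < r.length := hpq.trans hq
  rw [getD_eq_getElem r 0 hp, getD_eq_getElem r 0 hq]
  have h1 : [r[q]] <+ r.drop (p+1) := by
    rw [singleton_sublist]
    have hq' : q - (p+1) < (r.drop (p+1)).length := by simp; omega
    have : (r.drop (p+1))[q - (p+1)] = r[q] := by
      rw [getElem_drop]; congr 1; omega
    rw [← this]; exact getElem_mem _
  have h2 : [r[p], r[q]] <+ r[p] :: r.drop (p+1) := h1.cons₂ _
  have h3 : r[p] :: r.drop (p+1) = r.drop p := getElem_cons_drop hp
  exact (h3 ▸ h2).trans (drop_sublist p r)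


theorem stackAux_emp (bad : List ℕ → Prop) (a rest out) (h : bad [a]) :
    stackAux bad (a::rest) [] out = stackAux bad rest [a] out := by
  rw [stackAux.eq_def]; simp only [if_pos h]

theorem stackAux_nil (bad : List ℕ → Prop) (st out) : stackAux bad [] st out = out ++ st := by
  rw [stackAux.eq_def]
theorem stackAux_push (bad : List ℕ → Prop) (a rest st out) (h : ¬ bad (a :: st)) :
    stackAux bad (a::rest) st out = stackAux bad rest (a::st) out := by
  rw [stackAux.eq_def]; simp only [if_neg h]
theorem stackAux_pop (bad : List ℕ → Prop) (a rest b s out) (h : bad (a :: b :: s)) :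
    stackAux bad (a::rest) (b::s) out = stackAux bad (a::rest) s (out ++ [b]) := by
  rw [stackAux.eq_def]; simp only [if_pos h]

theorem tri_of_tail {c : ℕ} {l : List ℕ} (h : Tri l) : Tri (c :: l) := by
  obtain ⟨s, x, y, z, t, rfl, h1, h2, h3⟩ := h
  exact ⟨c :: s, x, y, z, t, rfl, h1, h2, h3⟩

theorem tri_cases {c : ℕ} {l : List ℕ} (h : Tri (c :: l)) :
    Tri l ∨ ∃ y z t, l = y :: z :: t ∧ c < y ∧ c < z ∧ z ≤ y := by
  obtain ⟨s, x, y, z, t, he, h1, h2, h3⟩ := h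
  cases s with
  | nil => right; simp at he; exact ⟨y, z, t, by simp [he], he.1 ▸ h1, he.1 ▸ h2, h3⟩
  | cons d s' => left; simp at he; exact ⟨s', x, y, z, t, he.2, h1, h2, h3⟩

theorem nd_pop {a : ℕ} {rest s : List ℕ} {b : ℕ} (h : ((a::rest) ++ b::s).Nodup) :
    ((a::rest) ++ s).Nodup :=
  (Sublist.append_left (sublist_cons_self b s) (a::rest)).nodup h

theorem nd_push {a : ℕ} {rest st : List ℕ} (h : ((a::rest) ++ st).Nodup) :
    (rest ++ a::st).Nodup := ((List.perm_middle (l₁ := rest) (l₂ := st) (a := a)).nodup_iff).2 h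

/-- If `i` sits immediately above `i+1` in the stack, they stay adjacent in the output. -/
theorem frozen (bad : List ℕ → Prop) (hbad : ∀ l, bad l ↔ Tri l) (i : ℕ) :
    ∀ inp stack out, ¬ Tri stack →
    ∀ u v, stack = u ++ i :: (i+1) :: v →
    ∃ s t, stackAux bad inp stack out = s ++ i :: (i+1) :: t := by
  intro inp stack out
  induction inp, stack, out using stackAux.induct bad with
  | case1 stack out =>
    rintro _ u v rfl
    exact ⟨out ++ u, v, by simp [stackAux_nil]⟩
  | case2 a rest out hb ih =>
    rintro _ u v he
    exact absurd he (by cases u <;> simp)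
  | case3 a rest out b s hb ih =>
    rintro htri u v he
    cases u with
    | nil =>
      exfalso
      simp only [nil_append, cons.injEq] at he
      obtain ⟨rfl, rfl⟩ := he
      rcases tri_cases ((hbad _).1 hb) with hT' | ⟨y, z, t, he2, h1, h2, h3⟩
      · exact htri hT'
      · simp only [cons.injEq] at he2
        obtain ⟨h4, h5, -⟩ := he2
        omega
    | cons c u' =>
      simp only [cons_append, cons.injEq] at he
      obtain ⟨rfl, rfl⟩ := he
      rw [stackAux_pop _ _ _ _ _ _ hb]
      exact ih (fun h => htri (tri_of_tail h)) u' v rfl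
  | case4 a rest stack out hb ih =>
    rintro htri u v rfl
    rw [stackAux_push _ _ _ _ _ hb]
    exact ih (fun h => hb ((hbad _).2 h)) (a :: u) v rfl


theorem stackAux_ord (bad : List ℕ → Prop) (inp stack out : List ℕ) :
    ∃ l, stackAux bad inp stack out = out ++ l ∧ stack <+ l := by
  induction inp, stack, out using stackAux.induct bad with
  | case1 stack out => exact ⟨stack, stackAux_nil _ _ _, Sublist.refl _⟩
  | case2 a rest out hb ih =>
    obtain ⟨l, hl, hs⟩ := ih
    exact ⟨l, (stackAux_emp _ _ _ _ hb).trans hl, nil_sublist _⟩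
  | case3 a rest out b s hb ih =>
    obtain ⟨l, hl, hs⟩ := ih
    refine ⟨b :: l, ?_, hs.cons₂ _⟩
    rw [stackAux_pop _ _ _ _ _ _ hb, hl]; simp
  | case4 a rest stack out hb ih =>
    obtain ⟨l, hl, hs⟩ := ih
    exact ⟨l, (stackAux_push _ _ _ _ _ hb).trans hl, ((sublist_cons_self a stack).trans hs)⟩

theorem stackAux_perm (bad : List ℕ → Prop) (inp stack out : List ℕ) :
    stackAux bad inp stack out ~ out ++ stack ++ inp := by
  induction inp, stack, out using stackAux.induct bad with
  | case1 stack out => rw [stackAux_nil]; simp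
  | case2 a rest out hb ih =>
    rw [stackAux_emp _ _ _ _ hb]
    refine ih.trans (by simp [perm_middle])
  | case3 a rest out b s hb ih =>
    rw [stackAux_pop _ _ _ _ _ _ hb]
    refine ih.trans ?_
    simp only [append_assoc, cons_append, nil_append]
    exact Perm.append_left out (by simpa using perm_middle.symm)
  | case4 a rest stack out hb ih =>
    rw [stackAux_push _ _ _ _ _ hb]
    refine ih.trans ?_
    simp only [append_assoc]
    exact Perm.append_left out (by simpa using perm_middle.symm)


def fS (i : ℕ) : ℕ → ℕ := fun x => if x = i then i + 1 else if x = i + 1 then i else x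

theorem tri_map_iff (g : ℕ → ℕ) (l : List ℕ) :
    Tri (l.map g) ↔ ∃ s x y z t, l = s ++ x :: y :: z :: t ∧
      g x < g y ∧ g x < g z ∧ g z ≤ g y := by
  constructor
  · rintro ⟨s', x', y', z', t', he, h1, h2, h3⟩
    rw [map_eq_append_iff] at he
    obtain ⟨s, m, rfl, hs, hm⟩ := he
    rw [map_eq_cons_iff] at hm
    obtain ⟨x, m1, rfl, rfl, hm⟩ := hm
    rw [map_eq_cons_iff] at hm
    obtain ⟨y, m2, rfl, rfl, hm⟩ := hm
    rw [map_eq_cons_iff] at hm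
    obtain ⟨z, t, rfl, rfl, -⟩ := hm
    exact ⟨s, x, y, z, t, rfl, h1, h2, h3⟩
  · rintro ⟨s, x, y, z, t, rfl, h1, h2, h3⟩
    exact ⟨s.map g, g x, g y, g z, t.map g, by simp, h1, h2, h3⟩

theorem ptwise (i x y z : ℕ) (hxy : x ≠ y) (hxz : x ≠ z) (hyz : y ≠ z)
    (h2a : ¬(y = i ∧ z = i+1)) (h2b : ¬(y = i+1 ∧ z = i))
    (h3 : x = i → z = i+1 → y < i) (h4 : x = i+1 → z = i → y < i) :
    (fS i x < fS i y ∧ fS i x < fS i z ∧ fS i z ≤ fS i y) ↔ (x < y ∧ x < z ∧ z ≤ y) := by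
  unfold fS
  split_ifs <;> omega

theorem dec (i : ℕ) {a : ℕ} {stack : List ℕ}
    (hnd : (a :: stack).Nodup)
    (htri : ¬ Tri stack)
    (hA : ¬ [i+1, i] <+ stack)
    (hB : ∀ u v, stack ≠ u ++ i :: (i+1) :: v)
    (hD1 : ¬ (a = i ∧ ∃ y v, stack = y :: (i+1) :: v ∧ i+1 < y))
    (hD2 : ¬ (a = i+1 ∧ ∃ y v, stack = y :: i :: v ∧ i+1 < y)) :
    Tri ((a :: stack).map (fS i)) ↔ Tri (a :: stack) := by
  have key : ∀ s x y z t, a :: stack = s ++ x :: y :: z :: t →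
      ((fS i x < fS i y ∧ fS i x < fS i z ∧ fS i z ≤ fS i y) ↔ (x < y ∧ x < z ∧ z ≤ y)) := by
    intro s x y z t he
    have hnd' : (s ++ x :: y :: z :: t).Nodup := he ▸ hnd
    have hxyz : [x, y, z].Nodup := by
      refine Sublist.nodup ?_ hnd'
      refine Sublist.trans ?_ (sublist_append_right s _)
      exact (Sublist.cons₂ _ (Sublist.cons₂ _ (Sublist.cons₂ _ (nil_sublist t))))
    have hxy : x ≠ y := by simp [nodup_cons] at hxyz; tauto
    have hxz : x ≠ z := by simp [nodup_cons] at hxyz; tauto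
    have hyz : y ≠ z := by simp [nodup_cons] at hxyz; tauto
    refine ptwise i x y z hxy hxz hyz ?_ ?_ ?_ ?_
    · rintro ⟨rfl, rfl⟩
      cases s with
      | nil =>
        simp only [nil_append, cons.injEq] at he
        exact hB [] t he.2
      | cons c s' =>
        simp only [cons_append, cons.injEq] at he
        exact hB (s' ++ [x]) t (by simp [he.2])
    · rintro ⟨rfl, rfl⟩
      apply hA
      cases s with
      | nil =>
        simp only [nil_append, cons.injEq] at he
        rw [he.2]
        exact Sublist.cons₂ _ (Sublist.cons₂ _ (nil_sublist t))
      | cons c s' =>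
        simp only [cons_append, cons.injEq] at he
        rw [he.2]
        refine Sublist.trans ?_ (sublist_append_right s' _)
        exact Sublist.cons _ (Sublist.cons₂ _ (Sublist.cons₂ _ (nil_sublist t)))
    · intro hx hz
      by_contra hy
      have hy1 : i + 1 < y := by omega
      rw [hx, hz] at he
      cases s with
      | nil =>
        simp only [nil_append, cons.injEq] at he
        exact hD1 ⟨he.1, y, t, he.2, hy1⟩
      | cons c s' =>
        simp only [cons_append, cons.injEq] at he
        exact htri ⟨s', i, y, i+1, t, he.2, by omega, by omega, by omega⟩
    · intro hx hz
      by_contra hy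
      have hy1 : i + 1 < y := by omega
      rw [hx, hz] at he
      cases s with
      | nil =>
        simp only [nil_append, cons.injEq] at he
        exact hD2 ⟨he.1, y, t, he.2, hy1⟩
      | cons c s' =>
        simp only [cons_append, cons.injEq] at he
        apply hA
        rw [he.2]
        refine Sublist.trans ?_ (sublist_append_right s' _)
        exact Sublist.cons₂ _ (Sublist.cons _ (Sublist.cons₂ _ (nil_sublist t)))
  constructor
  · rintro h
    rw [tri_map_iff] at h
    obtain ⟨s, x, y, z, t, he, c1, c2, c3⟩ := h
    exact ⟨s, x, y, z, t, he, (key s x y z t he).1 ⟨c1, c2, c3⟩⟩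
  · rintro ⟨s, x, y, z, t, he, c1, c2, c3⟩
    rw [tri_map_iff]
    exact ⟨s, x, y, z, t, he, (key s x y z t he).2 ⟨c1, c2, c3⟩⟩


theorem tri_length {l : List ℕ} (h : Tri l) : 3 ≤ l.length := by
  obtain ⟨s, x, y, z, t, rfl, -, -, -⟩ := h
  simp; omega

theorem sim (i : ℕ) (bad : List ℕ → Prop) (hbad : ∀ l, bad l ↔ Tri l) :
    ∀ inp stack out,
    (inp ++ stack).Nodup →
    ¬ Tri stack →
    (stackAux bad inp stack out).Nodup →
    (∀ s t, stackAux bad inp stack out ≠ s ++ i :: (i+1) :: t) →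
    [i, i+1] <+ stackAux bad inp stack out →
    stackAux bad (inp.map (fS i)) (stack.map (fS i)) (out.map (fS i))
      = (stackAux bad inp stack out).map (fS i) := by
  intro inp stack out
  induction inp, stack, out using stackAux.induct bad with
  | case1 stack out =>
    intro _ _ _ _ _
    simp only [List.map_nil]
    rw [stackAux_nil, stackAux_nil, map_append]
  | case2 a rest out hb _ =>
    intro _ _ _ _ _
    exact absurd (tri_length ((hbad _).1 hb)) (by simp)
  | case3 a rest out b s hb ih =>
    intro hnd htri hrnd hB1 hB2
    have hTri : Tri (a :: b :: s) := (hbad _).1 hb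
    have hpop : stackAux bad (a::rest) (b::s) out = stackAux bad (a::rest) s (out ++ [b]) :=
      stackAux_pop _ _ _ _ _ _ hb
    rw [hpop] at hrnd hB1 hB2
    have hnd3 : (a :: b :: s).Nodup := by
      refine Sublist.nodup ?_ hnd
      exact Sublist.cons₂ _ (sublist_append_right rest (b::s))
    have hA : ¬ [i+1, i] <+ (b :: s) := by
      intro hsub
      obtain ⟨l, hl, hs⟩ := stackAux_ord bad (a::rest) (b::s) out
      have hss : [i+1, i] <+ stackAux bad (a::rest) (b::s) out := by
        rw [hl]
        exact ((hsub.trans hs).trans (sublist_append_right out l))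
      rw [hpop] at hss
      exact absurd (duo hrnd hss hB2).symm (by omega)
    have hB : ∀ u v, (b :: s) ≠ u ++ i :: (i+1) :: v := by
      intro u v he
      obtain ⟨s', t', hfr⟩ := frozen bad hbad i (a::rest) (b::s) out htri u v he
      rw [hpop] at hfr
      exact hB1 s' t' hfr
    have hD1 : ¬ (a = i ∧ ∃ y v, (b :: s) = y :: (i+1) :: v ∧ i+1 < y) := by
      rintro ⟨hx, y, v, he, hy⟩
      have hs' : s = (i+1) :: v := by
        simpa using congrArg List.tail he
      subst hs'
      have hnotri : ¬ Tri (a :: (i+1) :: v) := by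
        intro hT
        rcases tri_cases hT with hT' | ⟨y', z', t', he2, c1, c2, c3⟩
        · exact htri (tri_of_tail hT')
        · have h12 : (i:ℕ)+1 = y' ∧ v = z' :: t' := by
            rw [List.cons.injEq] at he2
            exact he2
          obtain ⟨h1', h2'⟩ := h12
          have hz' : z' = i + 1 := by omega
          have hnd4 : ((i+1) :: v).Nodup := by
            refine Sublist.nodup ?_ hnd3
            exact Sublist.cons _ (Sublist.cons _ (Sublist.refl _))
          rw [h2', hz'] at hnd4
          simp at hnd4
      have hpush2 : stackAux bad (a::rest) ((i+1)::v) (out ++ [b]) =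
          stackAux bad rest (a::(i+1)::v) (out ++ [b]) :=
        stackAux_push _ _ _ _ _ (fun h => hnotri ((hbad _).1 h))
      obtain ⟨s', t', hfr⟩ := frozen bad hbad i rest (a::(i+1)::v) (out ++ [b])
        hnotri [] v (by simp [hx])
      rw [← hpush2] at hfr
      exact hB1 s' t' hfr
    have hD2 : ¬ (a = i+1 ∧ ∃ y v, (b :: s) = y :: i :: v ∧ i+1 < y) := by
      rintro ⟨hx, y, v, he, hy⟩
      have hs' : s = i :: v := by simpa using congrArg List.tail he
      subst hs'
      rcases tri_cases hTri with hT' | ⟨y', z', t', he2, c1, c2, c3⟩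
      · exact htri hT'
      · have h12 : b = y' ∧ (i:ℕ) = z' ∧ v = t' := by
          rw [List.cons.injEq, List.cons.injEq] at he2
          simpa using he2
        omega
    have hdec := dec i hnd3 htri hA hB hD1 hD2
    have hbf : bad (fS i a :: fS i b :: s.map (fS i)) := by
      refine (hbad _).2 ?_
      have hme : ((a :: b :: s).map (fS i)) = fS i a :: fS i b :: s.map (fS i) := by simp
      rw [← hme]
      exact hdec.2 hTri
    rw [hpop]
    have hrec := ih (nd_pop hnd) (fun h => htri (tri_of_tail h)) hrnd hB1 hB2
    simp only [List.map_cons, List.map_append] at hrec ⊢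
    rw [stackAux_pop _ _ _ _ _ _ hbf]
    simpa using hrec
  | case4 a rest stack out hb ih =>
    intro hnd htri hrnd hB1 hB2
    have hpush : stackAux bad (a::rest) stack out = stackAux bad rest (a::stack) out :=
      stackAux_push _ _ _ _ _ hb
    rw [hpush] at hrnd hB1 hB2
    have hnd3 : (a :: stack).Nodup := by
      refine Sublist.nodup ?_ hnd
      exact Sublist.cons₂ _ (sublist_append_right rest stack)
    have htri' : ¬ Tri (a :: stack) := fun h => hb ((hbad _).2 h)
    have hA : ¬ [i+1, i] <+ stack := by
      intro hsub
      obtain ⟨l, hl, hs⟩ := stackAux_ord bad rest (a::stack) out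
      have hss : [i+1, i] <+ stackAux bad rest (a::stack) out := by
        rw [hl]
        exact (((hsub.trans (sublist_cons_self a stack)).trans hs).trans
          (sublist_append_right out l))
      exact absurd (duo hrnd hss hB2).symm (by omega)
    have hB : ∀ u v, stack ≠ u ++ i :: (i+1) :: v := by
      intro u v he
      obtain ⟨s', t', hfr⟩ := frozen bad hbad i rest (a::stack) out htri' (a::u) v
        (by simp [he])
      exact hB1 s' t' hfr
    have hD1 : ¬ (a = i ∧ ∃ y v, stack = y :: (i+1) :: v ∧ i+1 < y) := by
      rintro ⟨hx, y, v, hst, hy⟩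
      exact htri' ⟨[], a, y, i+1, v, by simp [hst], by omega, by omega, by omega⟩
    have hD2 : ¬ (a = i+1 ∧ ∃ y v, stack = y :: i :: v ∧ i+1 < y) := by
      rintro ⟨hx, y, v, hst, hy⟩
      subst hst
      obtain ⟨l, hl, hs⟩ := stackAux_ord bad rest (a::(y::i::v)) out
      have hsub : [i+1, i] <+ a :: y :: i :: v := by
        rw [hx]
        exact Sublist.cons₂ _ (Sublist.cons _ (Sublist.cons₂ _ (nil_sublist v)))
      have hss : [i+1, i] <+ stackAux bad rest (a::(y::i::v)) out := by
        rw [hl]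
        exact ((hsub.trans hs).trans (sublist_append_right out l))
      exact absurd (duo hrnd hss hB2).symm (by omega)
    have hdec := dec i hnd3 htri hA hB hD1 hD2
    have hbf : ¬ bad (fS i a :: stack.map (fS i)) := by
      intro h
      have hme : ((a :: stack).map (fS i)) = fS i a :: stack.map (fS i) := by simp
      exact htri' (hdec.1 (hme ▸ (hbad _).1 h))
    rw [hpush]
    have hrec := ih (nd_push hnd) htri' hrnd hB1 hB2
    simp only [List.map_cons] at hrec ⊢
    rw [stackAux_push _ _ _ _ _ hbf]
    exact hrec

theorem fS_inj (i : ℕ) : Function.Injective (fS i) := by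
  intro x y h
  unfold fS at h
  split_ifs at h <;> omega

theorem fS_invol (i : ℕ) (x : ℕ) : fS i (fS i x) = x := by
  unfold fS
  split_ifs <;> omega

theorem base_nodup (n : ℕ) : (((List.range n).map (· + 1)) : List ℕ).Nodup :=
  (List.nodup_range : (List.range n).Nodup).map (fun a b h => by omega)

theorem mem_base (n x : ℕ) : x ∈ ((List.range n).map (· + 1)) ↔ 1 ≤ x ∧ x ≤ n := by
  simp only [List.mem_map, List.mem_range]
  constructor
  · rintro ⟨m, hm, rfl⟩; omega
  · rintro ⟨h1, h2⟩; exact ⟨x - 1, by omega, by omega⟩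

theorem base_map_perm (n i : ℕ) (hi1 : 1 ≤ i) (hi2 : i + 1 ≤ n) :
    (((List.range n).map (· + 1)).map (fS i)) ~ ((List.range n).map (· + 1)) := by
  refine (perm_ext_iff_of_nodup ((base_nodup n).map (fS_inj i)) (base_nodup n)).2 ?_
  intro x
  rw [List.mem_map]
  simp only [mem_base]
  constructor
  · rintro ⟨y, ⟨hy1, hy2⟩, rfl⟩
    unfold fS; split_ifs <;> omega
  · rintro ⟨h1, h2⟩
    refine ⟨fS i x, ⟨?_, ?_⟩, fS_invol i x⟩ <;> (unfold fS; split_ifs <;> omega)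

set_option maxHeartbeats 2000000 in
/-- If i appears before i+1 but not immediately before it in π, then swapping
i and i+1 does not decrease the number of preimages under SC_{132}. -/
theorem swap_preimages_mono (n : ℕ) (π : List ℕ) (hπ : IsPermList n π)
    (i : ℕ) (hi1 : 1 ≤ i) (hi2 : i + 1 ≤ n)
    (p q : ℕ) (hq : q < π.length) (hpq : p + 1 < q)
    (hp' : π.getD p 0 = i) (hq' : π.getD q 0 = i + 1) :
    preCount (SCc [1, 3, 2]) n π ≤
      preCount (SCc [1, 3, 2]) n
        (π.map (fun x => if x = i then i + 1 else if x = i + 1 then i else x)) := by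
  have hπnd : π.Nodup := (hπ.nodup_iff).2 (base_nodup n)
  have hp0 : p < π.length := by omega
  -- no adjacency i, i+1 in π
  have hB1 : ∀ s t, π ≠ s ++ i :: (i+1) :: t := by
    intro s t he
    have hsl : s.length + 1 < π.length := by
      rw [he]; simp
    have h1 : π[s.length]'(by omega) = i := by
      simp only [he]
      rw [List.getElem_append_right (by omega)]
      simp
    have h2 : π[s.length + 1]'(by omega) = i + 1 := by
      simp only [he]
      rw [List.getElem_append_right (by omega)]
      simp
    have hgp : π[p]'hp0 = i := by rw [← getD_eq_getElem π 0 hp0, hp']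
    have hgq : π[q]'hq = i + 1 := by rw [← getD_eq_getElem π 0 hq, hq']
    have ep : p = s.length := by
      have h' : π[p]'hp0 = π[s.length]'(by omega) := by rw [hgp, h1]
      exact (List.Nodup.getElem_inj_iff hπnd).1 h'
    have eq' : q = s.length + 1 := by
      have h' : π[q]'hq = π[s.length + 1]'(by omega) := by rw [hgq, h2]
      exact (List.Nodup.getElem_inj_iff hπnd).1 h' 
    omega
  have hB2 : [i, i+1] <+ π := by
    have := pos2 (r := π) (by omega : p < q) hq
    rwa [hp', hq'] at this
  -- the injection
  rw [preCount, preCount]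
  refine Finset.card_le_card_of_injOn (fun τ => τ.map (fS i)) ?_ ?_
  · intro τ hτ
    rw [Finset.mem_coe, Finset.mem_filter] at hτ ⊢
    obtain ⟨hmem, hval⟩ := hτ
    rw [permsFinset, List.mem_toFinset, List.mem_permutations] at hmem
    constructor
    · rw [permsFinset, List.mem_toFinset, List.mem_permutations]
      exact (hmem.map (fS i)).trans (base_map_perm n i hi1 hi2)
    · have hτnd : (τ ++ ([] : List ℕ)).Nodup := by
        simpa using (hmem.nodup_iff).2 (base_nodup n)
      have hr : stackAux (fun l => ContainsC l [1,3,2]) τ [] [] = π := hval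
      have hsim := sim i (fun l => ContainsC l [1,3,2]) (fun l => tri_iff l)
        τ [] [] hτnd (by rintro ⟨s, x, y, z, t, he, -⟩; simp at he)
        (by rw [hr]; exact hπnd)
        (by rw [hr]; exact hB1)
        (by rw [hr]; exact hB2)
      simp only [List.map_nil] at hsim
      show stackAux (fun l => ContainsC l [1,3,2]) (τ.map (fS i)) [] [] = _
      rw [hsim, hr]
      rfl
  · intro τ1 _ τ2 _ he
    exact List.map_injective_iff.2 (fS_inj i) he
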